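/- Let ρ be a density matrix and E, Π orthogonal projections on ℂⁿ, with Ẽ = I − E and N^s_x = G_s(x−1)·E + G_s(x)·Ẽ. Then in the strong (projective) measurement limit, lim_{s → 0⁺} ∫_{−∞}^{+∞} x · tr((N^s_x)† Π N^s_x ρ) dx = tr(Π E ρ E), i.e. the post-selected pointer expectation recovers the two-point-measurement joint probability. -/

import Mathlib

open MeasureTheory Matrix Filter
open scoped ComplexOrder Topology

/-- The Gaussian pointer wavefunction with spread `s`:
`G_s(x) = (π s²)^(−1/4) exp(−x²/(2 s²))`. -/
noncomputable def G (s x : ℝ) : ℝ :=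
  (Real.pi * s ^ 2) ^ (-(1 / 4 : ℝ)) * Real.exp (-x ^ 2 / (2 * s ^ 2))

/-- The Kraus operators of the Gaussian pointer measurement of the projection `E`
with pointer spread `s`: `N^s_x = G_s(x−1)·E + G_s(x)·(I − E)`. -/
noncomputable def Ns {n : ℕ} (E : Matrix (Fin n) (Fin n) ℂ) (s x : ℝ) :
    Matrix (Fin n) (Fin n) ℂ :=
  (G s (x - 1) : ℂ) • E + (G s x : ℂ) • (1 - E)

lemma int_odd {b : ℝ} (hb : 0 < b) : ∫ x : ℝ, x * Real.exp (-b * x^2) = 0 := by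
  have h := MeasureTheory.integral_neg_eq_self (fun x : ℝ => x * Real.exp (-b * x^2)) volume
  simp only [neg_sq, neg_mul] at h
  rw [integral_neg] at h
  simp only [neg_mul]
  linarith

lemma integrable_shift {b : ℝ} (hb : 0 < b) (m : ℝ) :
    MeasureTheory.Integrable (fun x : ℝ => x * Real.exp (-b * (x - m)^2)) := by
  have h : MeasureTheory.Integrable
      (fun x : ℝ => x * Real.exp (-b * x^2) + m * Real.exp (-b * x^2)) :=
    (integrable_mul_exp_neg_mul_sq hb).add ((integrable_exp_neg_mul_sq hb).const_mul m)
  have h2 := h.comp_sub_right m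
  refine h2.congr (Filter.Eventually.of_forall fun x => ?_)
  simp only []
  ring_nf

lemma integral_shift {b : ℝ} (hb : 0 < b) (m : ℝ) :
    ∫ x : ℝ, x * Real.exp (-b * (x - m)^2) = m * Real.sqrt (Real.pi / b) := by
  have he : (fun x : ℝ => x * Real.exp (-b * (x - m)^2)) =
      fun x => (fun y : ℝ => (y + m) * Real.exp (-b * y^2)) (x - m) := by
    funext x; simp [sub_add_cancel]
  rw [he, integral_sub_right_eq_self (fun y : ℝ => (y + m) * Real.exp (-b * y^2)) m]
  simp_rw [add_mul]
  rw [MeasureTheory.integral_add (integrable_mul_exp_neg_mul_sq hb)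
    ((integrable_exp_neg_mul_sq hb).const_mul m), int_odd hb, integral_const_mul,
    integral_gaussian]
  ring

lemma Gsq {s : ℝ} (hs : s ≠ 0) (x : ℝ) :
    G s x ^ 2 = ((Real.pi * s^2) ^ (-(1/4:ℝ)))^2 * Real.exp (-(1/s^2) * x^2) := by
  rw [G, mul_pow, sq (Real.exp _), ← Real.exp_add]
  congr 1
  field_simp
  ring

lemma Gmul {s : ℝ} (hs : s ≠ 0) (x : ℝ) :
    G s (x-1) * G s x = ((Real.pi*s^2)^(-(1/4:ℝ)))^2 * Real.exp (-(1/(4*s^2))) *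
      Real.exp (-(1/s^2) * (x - 1/2)^2) := by
  rw [G, G, mul_mul_mul_comm, ← sq, ← Real.exp_add, mul_assoc, ← Real.exp_add]
  congr 1
  field_simp
  ring

lemma Ksqrt {s : ℝ} (hs : 0 < s) :
    ((Real.pi*s^2)^(-(1/4:ℝ)))^2 * Real.sqrt (Real.pi / (1/s^2)) = 1 := by
  have hp : 0 < Real.pi * s^2 := by positivity
  have h1 : Real.pi / (1/s^2) = Real.pi * s^2 := by field_simp
  rw [h1, Real.sqrt_eq_rpow, ← Real.rpow_natCast (_ ^ (-(1/4:ℝ))) 2,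
    ← Real.rpow_mul hp.le, ← Real.rpow_add hp]
  norm_num

/-- Strong (projective) measurement limit: for a density matrix `ρ`
and orthogonal projections `E`, `P`,
`lim_{s → 0⁺} ∫ x · tr((N^s_x)† P N^s_x ρ) dx = tr(P E ρ E)`,
i.e. the post-selected pointer expectation recovers the two-point-measurement
joint probability. -/
theorem strong_measurement_limit_tpm
    (n : ℕ) (ρ E P : Matrix (Fin n) (Fin n) ℂ)
    (hρ : ρ.PosSemidef) (hρtr : ρ.trace = 1)
    (hE : E.IsHermitian) (hE2 : E * E = E)
    (hP : P.IsHermitian) (hP2 : P * P = P) :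
    Tendsto (fun s : ℝ => ∫ x : ℝ, (x : ℂ) * Matrix.trace ((Ns E s x)ᴴ * P * Ns E s x * ρ))
      (𝓝[>] (0 : ℝ)) (nhds (Matrix.trace (P * E * ρ * E))) := by
  set c1 : ℂ := Matrix.trace (E * P * E * ρ) with hc1
  set c2 : ℂ := Matrix.trace (E * P * (1-E) * ρ) + Matrix.trace ((1-E) * P * E * ρ) with hc2
  set c3 : ℂ := Matrix.trace ((1-E) * P * (1-E) * ρ) with hc3
  have hc : Matrix.trace (P * E * ρ * E) = c1 := by
    rw [hc1, Matrix.trace_mul_comm (P * E * ρ) E]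
    simp [Matrix.mul_assoc]
  rw [hc]
  -- value of the integral for each s > 0
  have hInt : ∀ s ∈ Set.Ioi (0:ℝ),
      (∫ x : ℝ, (x : ℂ) * Matrix.trace ((Ns E s x)ᴴ * P * Ns E s x * ρ))
        = c1 + (↑(Real.exp (-(1/(4*s^2)))) / 2 : ℂ) * c2 := by
    intro s hs
    have hs0 : (0:ℝ) < s := hs
    have hsne : s ≠ 0 := hs0.ne'
    have ht : (0:ℝ) < 1/s^2 := by positivity
    set K : ℝ := ((Real.pi * s^2) ^ (-(1/4:ℝ)))^2 with hK
    -- pointwise expansion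
    have hpt : ∀ x : ℝ, (x : ℂ) * Matrix.trace ((Ns E s x)ᴴ * P * Ns E s x * ρ)
        = (↑(x * G s (x-1)^2)) * c1 + (↑(x * (G s (x-1) * G s x))) * c2
          + (↑(x * G s x ^2)) * c3 := by
      intro x
      simp only [hc1, hc2, hc3, Ns, conjTranspose_add, conjTranspose_smul, conjTranspose_sub,
        conjTranspose_one, hE.eq, Complex.star_def, Complex.conj_ofReal,
        Matrix.add_mul, Matrix.mul_add, Matrix.smul_mul, Matrix.mul_smul,
        Matrix.trace_add, Matrix.trace_smul, smul_smul, smul_eq_mul]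
      push_cast
      ring
    -- rewritten forms of the three coefficient functions
    have ha_eq : (fun x : ℝ => x * G s (x-1)^2)
        = fun x => K * (x * Real.exp (-(1/s^2) * (x - 1)^2)) := by
      funext x; rw [Gsq hsne]; ring
    have hab_eq : (fun x : ℝ => x * (G s (x-1) * G s x))
        = fun x => (K * Real.exp (-(1/(4*s^2)))) * (x * Real.exp (-(1/s^2) * (x - 1/2)^2)) := by
      funext x; rw [Gmul hsne]; ring
    have hb_eq : (fun x : ℝ => x * G s x ^2)
        = fun x => K * (x * Real.exp (-(1/s^2) * x^2)) := by
      funext x; rw [Gsq hsne]; ring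
    have ha_int : Integrable (fun x : ℝ => x * G s (x-1)^2) := by
      rw [ha_eq]; exact (integrable_shift ht 1).const_mul K
    have hab_int : Integrable (fun x : ℝ => x * (G s (x-1) * G s x)) := by
      rw [hab_eq]; exact (integrable_shift ht (1/2)).const_mul _
    have hb_int : Integrable (fun x : ℝ => x * G s x ^2) := by
      have h := (integrable_mul_exp_neg_mul_sq ht).const_mul K
      rw [hb_eq]; exact h
    -- the three real integrals
    have Ia : (∫ x : ℝ, x * G s (x-1)^2) = 1 := by
      rw [ha_eq, integral_const_mul, integral_shift ht 1, one_mul, hK]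
      exact Ksqrt hs0
    have Iab : (∫ x : ℝ, x * (G s (x-1) * G s x)) = Real.exp (-(1/(4*s^2))) / 2 := by
      rw [hab_eq, integral_const_mul, integral_shift ht (1/2)]
      have h := Ksqrt hs0
      rw [← hK] at h
      linear_combination (Real.exp (-(1/(4*s^2))) / 2) * h
    have Ib : (∫ x : ℝ, x * G s x ^2) = 0 := by
      rw [hb_eq, integral_const_mul, int_odd ht, mul_zero]
    have int1 : Integrable (fun x : ℝ => (↑(x * G s (x-1)^2) : ℂ) * c1) :=
      ha_int.ofReal.mul_const c1
    have int2 : Integrable (fun x : ℝ => (↑(x * (G s (x-1) * G s x)) : ℂ) * c2) :=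
      hab_int.ofReal.mul_const c2
    have int3 : Integrable (fun x : ℝ => (↑(x * G s x ^2) : ℂ) * c3) :=
      hb_int.ofReal.mul_const c3
    have int12 : Integrable (fun x : ℝ => (↑(x * G s (x-1)^2) : ℂ) * c1
        + (↑(x * (G s (x-1) * G s x)) : ℂ) * c2) := int1.add int2
    simp_rw [hpt]
    rw [integral_add int12 int3, integral_add int1 int2,
      integral_mul_const, integral_mul_const, integral_mul_const]
    have o1 : (∫ x : ℝ, ((x * G s (x-1)^2 : ℝ) : ℂ)) = ((∫ x : ℝ, x * G s (x-1)^2 : ℝ) : ℂ) :=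
      integral_ofReal
    have o2 : (∫ x : ℝ, ((x * (G s (x-1) * G s x) : ℝ) : ℂ))
        = ((∫ x : ℝ, x * (G s (x-1) * G s x) : ℝ) : ℂ) := integral_ofReal
    have o3 : (∫ x : ℝ, ((x * G s x ^2 : ℝ) : ℂ)) = ((∫ x : ℝ, x * G s x ^2 : ℝ) : ℂ) :=
      integral_ofReal
    rw [o1, o2, o3, Ia, Iab, Ib]
    push_cast
    ring
  -- limit of the model function
  have hexp : Tendsto (fun s : ℝ => Real.exp (-(1/(4*s^2)))) (𝓝[>] (0:ℝ)) (𝓝 0) := by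
    have h2 : Tendsto (fun s : ℝ => 4*s^2) (𝓝[>] (0:ℝ)) (𝓝[>] (0:ℝ)) := by
      apply tendsto_nhdsWithin_of_tendsto_nhds_of_eventually_within
      · have hcont : Continuous fun s : ℝ => 4*s^2 := by continuity
        simpa using (hcont.tendsto 0).mono_left nhdsWithin_le_nhds
      · filter_upwards [self_mem_nhdsWithin] with s hs
        have : (0:ℝ) < s := hs
        exact Set.mem_Ioi.mpr (by positivity)
    have h1 : Tendsto (fun s : ℝ => 1/(4*s^2)) (𝓝[>] (0:ℝ)) atTop :=
      (tendsto_inv_nhdsGT_zero.comp h2).congr fun s => (one_div _).symm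
    exact Real.tendsto_exp_atBot.comp (tendsto_neg_atTop_atBot.comp h1)
  have hmodel : Tendsto (fun s : ℝ => c1 + (↑(Real.exp (-(1/(4*s^2)))) / 2 : ℂ) * c2)
      (𝓝[>] (0:ℝ)) (𝓝 c1) := by
    have h0 : Tendsto (fun s : ℝ => (↑(Real.exp (-(1/(4*s^2)))) : ℂ)) (𝓝[>] (0:ℝ)) (𝓝 0) := by
      simpa only [Complex.ofReal_zero, Function.comp_def] using (Complex.continuous_ofReal.tendsto 0).comp hexp
    have h := (tendsto_const_nhds (x := c1) (f := 𝓝[>] (0:ℝ))).add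
      ((h0.div_const 2).mul_const c2)
    simpa using h
  refine hmodel.congr' ?_
  filter_upwards [self_mem_nhdsWithin] with s hs
  exact (hInt s hs).symm
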